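/- Let W, V, Y be discrete random variables with Markov chain W → V → Y, and suppose H(V) = n(R + R^c), H(V | W, Y) ≤ nε₁, H(Y | V) ≥ nH₀ - nε₂, and H(Y) ≤ nH₁ + nε₃ with H₁ - H₀ ≤ R^c. Then H(W | Y) ≥ H(W) - n(ε₁+ε₂+ε₃) - n(H₁ - H₀ - R^c) ≥ nR - n(ε₁+ε₂+ε₃), provided H(W) = nR and W is determined together with a confusion index by V. -/
import Mathlib


open MeasureTheory

/-- Shannon entropy of a random variable with values in a finite type. -/
noncomputable def entropy {Ω α : Type*} [MeasurableSpace Ω] [Fintype α]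
    (μ : Measure Ω) (X : Ω → α) : ℝ :=
  ∑ a, Real.negMulLog ((μ (X ⁻¹' {a})).toReal)

/-- Conditional Shannon entropy `H(X | Y) = H(X, Y) - H(Y)`. -/
noncomputable def condEntropy {Ω α β : Type*} [MeasurableSpace Ω]
    [Fintype α] [Fintype β] (μ : Measure Ω) (X : Ω → α) (Y : Ω → β) : ℝ :=
  entropy μ (fun ω => (X ω, Y ω)) - entropy μ Y

lemma entropy_comp_injective {Ω α β : Type*} [MeasurableSpace Ω]
    [Fintype α] [Fintype β] (μ : Measure Ω) (X : Ω → α) (φ : α → β)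
    (hφ : Function.Injective φ) :
    entropy μ (fun ω => φ (X ω)) = entropy μ X := by
  classical
  unfold entropy
  set f : β → ℝ := fun b => Real.negMulLog ((μ ((fun ω => φ (X ω)) ⁻¹' {b})).toReal) with hf
  calc ∑ b : β, f b
      = ∑ b ∈ Finset.univ.image φ, f b := by
        refine (Finset.sum_subset (Finset.subset_univ _) ?_).symm
        intro b _ hb
        have : (fun ω => φ (X ω)) ⁻¹' {b} = ∅ := by
          ext ω
          simp only [Set.mem_preimage, Set.mem_singleton_iff, Set.mem_empty_iff_false, iff_false]
          intro h
          exact hb (Finset.mem_image.mpr ⟨X ω, Finset.mem_univ _, h⟩)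
        simp [hf, this, Real.negMulLog]
    _ = ∑ a : α, f (φ a) := Finset.sum_image (fun a _ b _ h => hφ h)
    _ = ∑ a : α, Real.negMulLog ((μ (X ⁻¹' {a})).toReal) := by
        apply Finset.sum_congr rfl
        intro a _
        have : (fun ω => φ (X ω)) ⁻¹' {φ a} = X ⁻¹' {a} := by
          ext ω; simp [hφ.eq_iff]
        simp [hf, this]

/-- Skeleton of the equivocation computation: with Markov chain `W → V → Y`,
`V` determining `W` together with a confusion index, `H(V) = n(R + Rᶜ)`,
`H(V | W, Y) ≤ n ε₁`, `H(Y | V) ≥ n H₀ - n ε₂`, `H(Y) ≤ n H₁ + n ε₃`,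
`H₁ - H₀ ≤ Rᶜ` and `H(W) = n R`, we get
`H(W | Y) ≥ H(W) - n(ε₁+ε₂+ε₃) - n(H₁ - H₀ - Rᶜ) ≥ n R - n(ε₁+ε₂+ε₃)`. -/
theorem stmt17 {Ω 𝒲 𝒱 𝒴 𝒞 : Type*} [MeasurableSpace Ω]
    [Fintype 𝒲] [Fintype 𝒱] [Fintype 𝒴] [Fintype 𝒞]
    (μ : Measure Ω) [IsProbabilityMeasure μ]
    (W : Ω → 𝒲) (V : Ω → 𝒱) (Y : Ω → 𝒴) (C : Ω → 𝒞)
    (n R Rc ε₁ ε₂ ε₃ H₀ H₁ : ℝ) (hn : 0 < n)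
    (hMarkov : ∀ w v y,
      (μ {ω | W ω = w ∧ V ω = v ∧ Y ω = y}).toReal
          * (μ {ω | V ω = v}).toReal
        = (μ {ω | W ω = w ∧ V ω = v}).toReal
          * (μ {ω | V ω = v ∧ Y ω = y}).toReal)
    (hdet : ∃ g : 𝒱 → 𝒲 × 𝒞, ∀ ω, (W ω, C ω) = g (V ω))
    (hV : entropy μ V = n * (R + Rc))
    (hFano : condEntropy μ V (fun ω => (W ω, Y ω)) ≤ n * ε₁)
    (hYgV : condEntropy μ Y V ≥ n * H₀ - n * ε₂)
    (hY : entropy μ Y ≤ n * H₁ + n * ε₃)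
    (hRc : H₁ - H₀ ≤ Rc)
    (hW : entropy μ W = n * R) :
    condEntropy μ W Y
        ≥ entropy μ W - n * (ε₁ + ε₂ + ε₃) - n * (H₁ - H₀ - Rc)
    ∧ entropy μ W - n * (ε₁ + ε₂ + ε₃) - n * (H₁ - H₀ - Rc)
        ≥ n * R - n * (ε₁ + ε₂ + ε₃) := by
  obtain ⟨g, hg⟩ := hdet
  have key : entropy μ (fun ω => (V ω, (W ω, Y ω)))
      = entropy μ (fun ω => (Y ω, V ω)) := by
    have := entropy_comp_injective μ (fun ω => (Y ω, V ω))
      (fun p : 𝒴 × 𝒱 => (p.2, ((g p.2).1, p.1)))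
      (by intro p q h; simp only [Prod.mk.injEq] at h; exact Prod.ext h.2.2 h.1)
    rw [← this]
    congr 1
    funext ω
    have hgw : (g (V ω)).1 = W ω := by rw [← hg ω]
    simp [hgw]
  have e1 : condEntropy μ W Y
      = entropy μ V + condEntropy μ Y V - condEntropy μ V (fun ω => (W ω, Y ω))
        - entropy μ Y := by
    unfold condEntropy
    rw [key]; ring
  constructor
  · have h2 : n * (ε₁ + ε₂ + ε₃) = n * ε₁ + n * ε₂ + n * ε₃ := by ring
    have h3 : n * (H₁ - H₀ - Rc) = n * H₁ - n * H₀ - n * Rc := by ring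
    have h4 : n * (R + Rc) = n * R + n * Rc := by ring
    linarith
  · have h5 : n * (H₁ - H₀ - Rc) ≤ 0 := by
      have : H₁ - H₀ - Rc ≤ 0 := by linarith
      exact mul_nonpos_of_nonneg_of_nonpos hn.le this
    linarith
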